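/- Fix η ∈ ℝ and suppose ŷ i ≠ −η for all i. Then as β → +∞, each smooth confusion-matrix entry converges to the corresponding hard confusion-matrix entry with threshold t = −η: t̃p(β) → tp, f̃p(β) → fp, f̃n(β) → fn, t̃n(β) → tn. -/

import Mathlib

noncomputable def S (u β η : ℝ) : ℝ := 1 / (1 + Real.exp (-β * (u + η)))

lemma S_tendsto (u η : ℝ) (h : u ≠ -η) :
    Filter.Tendsto (fun β : ℝ => S u β η) Filter.atTop
      (nhds (if u ≥ -η then (1:ℝ) else 0)) := by
  rcases lt_or_gt_of_ne h with hlt | hgt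
  · -- u + η < 0, exp → ∞, S → 0
    rw [if_neg (not_le.mpr hlt)]
    have hc : 0 < -(u + η) := by linarith
    have h1 : Filter.Tendsto (fun β : ℝ => -β * (u + η)) Filter.atTop Filter.atTop := by
      have := Filter.tendsto_id.atTop_mul_const (f := fun β : ℝ => β) hc
      refine this.congr (fun β => by ring)
    have h2 : Filter.Tendsto (fun β : ℝ => 1 + Real.exp (-β * (u + η))) Filter.atTop
        Filter.atTop := Filter.tendsto_atTop_add_const_left _ 1 (Real.tendsto_exp_atTop.comp h1)
    simpa [S, one_div, Pi.inv_def] using h2.inv_tendsto_atTop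
  · -- u + η > 0, exp → 0, S → 1
    rw [if_pos (le_of_lt hgt)]
    have hc : 0 < (u + η) := by linarith
    have h1 : Filter.Tendsto (fun β : ℝ => -β * (u + η)) Filter.atTop Filter.atBot := by
      have := Filter.tendsto_neg_atTop_atBot.comp
        (Filter.tendsto_id.atTop_mul_const (f := fun β : ℝ => β) hc)
      refine this.congr (fun β => by simp [Function.comp])
    have h2 : Filter.Tendsto (fun β : ℝ => 1 + Real.exp (-β * (u + η))) Filter.atTop
        (nhds 1) := by
      have := (Real.tendsto_exp_atBot.comp h1)
      simpa using (tendsto_const_nhds (x := (1:ℝ))).add this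
    have : Filter.Tendsto (fun β : ℝ => S u β η) Filter.atTop (nhds (1/1)) := by
      have := (tendsto_const_nhds (x := (1:ℝ))).div h2 (by norm_num)
      refine ((this.congr (fun β => ?_)) : _)
      simp [S, Pi.div_apply]
    simpa using this
theorem smooth_confusion_tendsto_hard (n : ℕ) (yhat y : Fin n → ℝ) (η : ℝ)
    (hne : ∀ i, yhat i ≠ -η) :
    Filter.Tendsto (fun β : ℝ => ∑ i, S (yhat i) β η * y i) Filter.atTop
      (nhds (∑ i, (if yhat i ≥ -η then (1:ℝ) else 0) * y i)) ∧
    Filter.Tendsto (fun β : ℝ => ∑ i, S (yhat i) β η * (1 - y i)) Filter.atTop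
      (nhds (∑ i, (if yhat i ≥ -η then (1:ℝ) else 0) * (1 - y i))) ∧
    Filter.Tendsto (fun β : ℝ => ∑ i, (1 - S (yhat i) β η) * y i) Filter.atTop
      (nhds (∑ i, (if yhat i < -η then (1:ℝ) else 0) * y i)) ∧
    Filter.Tendsto (fun β : ℝ => ∑ i, (1 - S (yhat i) β η) * (1 - y i)) Filter.atTop
      (nhds (∑ i, (if yhat i < -η then (1:ℝ) else 0) * (1 - y i))) := by
  have key : ∀ i, Filter.Tendsto (fun β : ℝ => S (yhat i) β η) Filter.atTop
      (nhds (if yhat i ≥ -η then (1:ℝ) else 0)) := fun i => S_tendsto _ _ (hne i)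
  have keyc : ∀ i, Filter.Tendsto (fun β : ℝ => 1 - S (yhat i) β η) Filter.atTop
      (nhds (if yhat i < -η then (1:ℝ) else 0)) := by
    intro i
    have := (tendsto_const_nhds (x := (1:ℝ))).sub (key i)
    convert this using 2
    by_cases h : yhat i ≥ -η <;> simp [h, lt_iff_not_ge]
  refine ⟨?_, ?_, ?_, ?_⟩ <;>
    exact tendsto_finset_sum _ (fun i _ => by
      first
        | exact (key i).mul_const _
        | exact (keyc i).mul_const _)
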